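/- Let λ_1 ≤ ⋯ ≤ λ_n be real numbers, let 1 ≤ N < n with λ_N < λ_{N+1}, and let μ : (0,∞) → ℝ be a function such that Σ_{i=1}^n (1 + exp(β(λ_i − μ(β))))⁻¹ = N for every β > 0. Then μ(β) → (λ_N + λ_{N+1})/2 as β → ∞. -/

import Mathlib

open BigOperators Filter

lemma L4 (x : ℝ) : (1 + Real.exp x)⁻¹ ≤ Real.exp (-x) := by
  rw [Real.exp_neg]
  exact inv_anti₀ (Real.exp_pos x) (by linarith [Real.exp_pos x])

lemma L5 (x : ℝ) : (1 + Real.exp x)⁻¹ ≤ 1 := by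
  have := Real.exp_pos x
  have hp : (0:ℝ) < 1 + Real.exp x := by linarith
  rw [inv_le_one₀ hp]
  linarith

lemma L3 (x : ℝ) : 1 - Real.exp x ≤ (1 + Real.exp x)⁻¹ := by
  have h := Real.exp_pos x
  have hp : (0:ℝ) < 1 + Real.exp x := by linarith
  rw [← one_div, le_div_iff₀ hp]
  nlinarith [sq_nonneg (Real.exp x)]

lemma L1 (x t : ℝ) (hxt : x ≤ t) (ht : 0 ≤ t) :
    Real.exp (-t) / 2 ≤ (1 + Real.exp x)⁻¹ := by
  have h1 : (1:ℝ) ≤ Real.exp t := Real.one_le_exp ht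
  have h2 : Real.exp x ≤ Real.exp t := Real.exp_le_exp.2 hxt
  have h3 : (0:ℝ) < 1 + Real.exp x := by positivity
  calc Real.exp (-t) / 2 = (2 * Real.exp t)⁻¹ := by
        rw [Real.exp_neg]; rw [mul_inv]; ring
    _ ≤ (1 + Real.exp x)⁻¹ := inv_anti₀ h3 (by linarith)

lemma fermi (x : ℝ) : (1 + Real.exp x)⁻¹ = 1 - (1 + Real.exp (-x))⁻¹ := by
  have h := Real.exp_pos x
  rw [Real.exp_neg]
  field_simp
  ring

lemma L2 (x t : ℝ) (hxt : -t ≤ x) (ht : 0 ≤ t) :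
    (1 + Real.exp x)⁻¹ ≤ 1 - Real.exp (-t) / 2 := by
  rw [fermi]
  have := L1 (-x) t (by linarith) ht
  linarith

lemma sum_fin_split {n N : ℕ} (hNn : N ≤ n) (g : ℕ → ℝ) :
    ∑ i : Fin n, g i = ∑ i ∈ Finset.range N, g i + ∑ i ∈ Finset.Ico N n, g i := by
  rw [Fin.sum_univ_eq_sum_range, Finset.range_eq_Ico, Finset.range_eq_Ico,
    ← Finset.sum_Ico_consecutive g (Nat.zero_le N) hNn]

theorem stmt19 {n N : ℕ} (hN1 : 1 ≤ N) (hNn : N < n)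
    (lam : Fin n → ℝ) (hmono : Monotone lam)
    (hgap : lam ⟨N - 1, by omega⟩ < lam ⟨N, hNn⟩)
    (μ : ℝ → ℝ)
    (hμ : ∀ β : ℝ, 0 < β → ∑ i, (1 + Real.exp (β * (lam i - μ β)))⁻¹ = (N : ℝ)) :
    Tendsto μ atTop (nhds ((lam ⟨N - 1, by omega⟩ + lam ⟨N, hNn⟩) / 2)) := by
  have ha' : N - 1 < n := by omega
  set a := lam ⟨N - 1, ha'⟩ with hadef
  set b := lam ⟨N, hNn⟩ with hbdef
  have hab : a < b := hgap
  set m := (a + b) / 2 with hmdef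
  set δ := (b - a) / 2 with hδdef
  have hδ : 0 < δ := by rw [hδdef]; linarith
  have hma : m - a = δ := by rw [hmdef, hδdef]; ring
  have hbm : b - m = δ := by rw [hmdef, hδdef]; ring
  show Tendsto μ atTop (nhds m)
  rw [Metric.tendsto_nhds]
  intro ε hε
  set ε' := min (ε / 2) (δ / 2) with hε'def
  have hε'pos : 0 < ε' := lt_min (by linarith) (by linarith)
  have hε'δ : ε' < δ := lt_of_le_of_lt (min_le_right _ _) (by linarith)
  have hε'ε : ε' < ε := lt_of_le_of_lt (min_le_left _ _) (by linarith)
  -- smallness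
  have hlim : Tendsto (fun β : ℝ => (n : ℝ) * Real.exp (-(2 * ε') * β)) atTop (nhds 0) := by
    have h1 : Tendsto (fun β : ℝ => -(2 * ε') * β) atTop atBot := by
      apply Tendsto.const_mul_atTop_of_neg (by linarith : -(2 * ε') < 0) tendsto_id
    simpa using (Real.tendsto_exp_atBot.comp h1).const_mul (n : ℝ)
  have hev : ∀ᶠ β in atTop, (n : ℝ) * Real.exp (-(2 * ε') * β) < 1 / 2 :=
    hlim.eventually_lt_const (by norm_num)
  filter_upwards [hev, eventually_gt_atTop 0] with β hsmall hβ
  -- set up the split sum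
  set g : ℕ → ℝ := fun i => if h : i < n then (1 + Real.exp (β * (lam ⟨i, h⟩ - μ β)))⁻¹ else 0
    with hgdef
  have hg : ∀ i : Fin n, (1 + Real.exp (β * (lam i - μ β)))⁻¹ = g i := by
    intro i
    simp [hgdef, i.isLt]
  have hgnonneg : ∀ i, 0 ≤ g i := by
    intro i
    rw [hgdef]
    dsimp only
    split <;> positivity
  have hco : ∑ i ∈ Finset.range N, g i + ∑ i ∈ Finset.Ico N n, g i = (N : ℝ) := by
    rw [← sum_fin_split hNn.le g, ← hμ β hβ]
    exact Finset.sum_congr rfl fun i _ => (hg i).symm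
  set E₁ := Real.exp (-(β * (δ - ε'))) with hE₁def
  set E₂ := Real.exp (-(β * (δ + ε'))) with hE₂def
  have hE₁pos : 0 < E₁ := Real.exp_pos _
  have hE₂eq : E₂ = Real.exp (-(2 * ε') * β) * E₁ := by
    rw [hE₁def, hE₂def, ← Real.exp_add]; congr 1; ring
  have hnE₂ : (n : ℝ) * E₂ < E₁ / 2 := by
    rw [hE₂eq]
    calc (n : ℝ) * (Real.exp (-(2 * ε') * β) * E₁)
        = ((n : ℝ) * Real.exp (-(2 * ε') * β)) * E₁ := by ring
      _ < (1 / 2) * E₁ := by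
          exact mul_lt_mul_of_pos_right hsmall hE₁pos
      _ = E₁ / 2 := by ring
  have htpos : (0:ℝ) ≤ β * (δ - ε') := by
    have : (0:ℝ) ≤ δ - ε' := by linarith
    positivity
  have hE₂pos : 0 < E₂ := Real.exp_pos _
  have hnN : ((n - N : ℕ) : ℝ) = (n : ℝ) - (N : ℝ) := by
    rw [Nat.cast_sub hNn.le]
  have hN1' : ((N - 1 : ℕ) : ℝ) = (N : ℝ) - 1 := by
    rw [Nat.cast_sub hN1]; norm_num
  -- Case A : μ β cannot be ≤ m - ε'
  have h1 : ¬ (μ β ≤ m - ε') := by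
    intro hA
    have hNsub : N - 1 + 1 = N := by omega
    have hsplitN : ∑ i ∈ Finset.range N, g i
        = ∑ i ∈ Finset.range (N - 1), g i + g (N - 1) := by
      conv_lhs => rw [← hNsub]
      rw [Finset.sum_range_succ]
    have hA1 : ∑ i ∈ Finset.range (N - 1), g i ≤ ((N - 1 : ℕ) : ℝ) := by
      have := Finset.sum_le_card_nsmul (Finset.range (N - 1)) g 1 (by
        intro i hi
        have hin : i < n := by have := Finset.mem_range.1 hi; omega
        rw [hgdef]; dsimp only; rw [dif_pos hin]; exact L5 _)
      simpa [Finset.card_range, nsmul_eq_mul] using this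
    have hA2 : g (N - 1) ≤ 1 - E₁ / 2 := by
      rw [hgdef]; dsimp only; rw [dif_pos ha']
      apply L2 _ _ _ htpos
      have h := mul_le_mul_of_nonneg_left (show ε' - δ ≤ a - μ β by linarith) hβ.le
      have h' : -(β * (δ - ε')) = β * (ε' - δ) := by ring
      rw [h']; exact h.trans_eq (by rw [hadef])
    have hA3 : ∑ i ∈ Finset.Ico N n, g i ≤ ((n - N : ℕ) : ℝ) * E₂ := by
      have := Finset.sum_le_card_nsmul (Finset.Ico N n) g E₂ (by
        intro i hi
        obtain ⟨hNi, hin⟩ := Finset.mem_Ico.1 hi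
        have hblam : b ≤ lam ⟨i, hin⟩ := hmono (Fin.mk_le_mk.2 hNi)
        rw [hgdef]; dsimp only; rw [dif_pos hin]
        calc (1 + Real.exp (β * (lam ⟨i, hin⟩ - μ β)))⁻¹
            ≤ Real.exp (-(β * (lam ⟨i, hin⟩ - μ β))) := L4 _
          _ ≤ E₂ := by
              apply Real.exp_le_exp.2
              apply neg_le_neg
              exact mul_le_mul_of_nonneg_left (by linarith) hβ.le)
      simpa [Nat.card_Ico, nsmul_eq_mul] using this
    have hIcoN : ((n - N : ℕ) : ℝ) * E₂ ≤ (n : ℝ) * E₂ := by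
      apply mul_le_mul_of_nonneg_right _ hE₂pos.le
      rw [hnN]; linarith [Nat.cast_nonneg (α := ℝ) N]
    rw [hsplitN] at hco
    rw [hN1'] at hA1
    linarith
  -- Case B : μ β cannot be ≥ m + ε'
  have h2 : ¬ (m + ε' ≤ μ β) := by
    intro hB
    have hB1 : (N : ℝ) * (1 - E₂) ≤ ∑ i ∈ Finset.range N, g i := by
      have := Finset.card_nsmul_le_sum (Finset.range N) g (1 - E₂) (by
        intro i hi
        have hiN : i < N := Finset.mem_range.1 hi
        have hin : i < n := by omega
        have hlama : lam ⟨i, hin⟩ ≤ a := hmono (Fin.mk_le_mk.2 (by omega))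
        rw [hgdef]; dsimp only; rw [dif_pos hin]
        have hx : β * (lam ⟨i, hin⟩ - μ β) ≤ -(β * (δ + ε')) := by
          have h := mul_le_mul_of_nonneg_left
            (show lam ⟨i, hin⟩ - μ β ≤ -(δ + ε') by linarith) hβ.le
          have h' : β * -(δ + ε') = -(β * (δ + ε')) := by ring
          linarith [h.trans_eq h']
        have hexp : Real.exp (β * (lam ⟨i, hin⟩ - μ β)) ≤ E₂ := Real.exp_le_exp.2 hx
        have := L3 (β * (lam ⟨i, hin⟩ - μ β))
        linarith)
      simpa [Finset.card_range, nsmul_eq_mul] using this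
    have hB2 : E₁ / 2 ≤ g N := by
      rw [hgdef]; dsimp only; rw [dif_pos hNn]
      apply L1 _ _ _ htpos
      have h := mul_le_mul_of_nonneg_left (show lam ⟨N, hNn⟩ - μ β ≤ δ - ε' by
        rw [← hbdef]; linarith) hβ.le
      linarith
    have hB3 : g N ≤ ∑ i ∈ Finset.Ico N n, g i :=
      Finset.single_le_sum (fun i _ => hgnonneg i) (Finset.mem_Ico.2 ⟨le_refl N, hNn⟩)
    have hNE₂ : (N : ℝ) * E₂ ≤ (n : ℝ) * E₂ :=
      mul_le_mul_of_nonneg_right (Nat.cast_le.2 hNn.le) hE₂pos.le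
    nlinarith
  push_neg at h1 h2
  rw [Real.dist_eq, abs_lt]
  constructor <;> linarith
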